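/- Let X be a finite set and let A be an abelian 2-orbit-closed subgroup of Sym(X) with at least two orbits on X. Then for every orbit O of A, A_O^* equals the intersection over all orbits Q ≠ O of the subgroups A_O^Q; that is, a permutation of O is the restriction of some element of A fixing X∖O pointwise if and only if, for every orbit Q ≠ O, it is the restriction of some element of A fixing Q pointwise. -/

import Mathlib

/-- The orbit of a point `x` under a set `G` of permutations of `X`. -/
def orbitOf {X : Type*} (G : Set (Equiv.Perm X)) (x : X) : Set X :=
  {y | ∃ a ∈ G, a x = y}

/-- A permutation `σ` is 2-orbit-compatible with `G` if for every pair of orbits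
`O` and `Q` of `G` there is an element of `G` agreeing with `σ` on `O ∪ Q`. -/
def TwoOrbitCompatible {X : Type*} (G : Set (Equiv.Perm X)) (σ : Equiv.Perm X) : Prop :=
  ∀ x y : X, ∃ a ∈ G, ∀ z ∈ orbitOf G x ∪ orbitOf G y, σ z = a z

/-- A subgroup `A ≤ Sym(X)` is 2-orbit-closed if every permutation that is
2-orbit-compatible with `A` belongs to `A`. -/
def TwoOrbitClosed {X : Type*} (A : Subgroup (Equiv.Perm X)) : Prop :=
  ∀ σ : Equiv.Perm X, TwoOrbitCompatible (A : Set (Equiv.Perm X)) σ → σ ∈ A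

section Aux

variable {X : Type*} {A : Subgroup (Equiv.Perm X)}

lemma mem_orbitOf_self (x : X) : x ∈ orbitOf (A : Set (Equiv.Perm X)) x :=
  ⟨1, A.one_mem, rfl⟩

lemma smul_mem_orbitOf {a : Equiv.Perm X} (ha : a ∈ A) {x z : X}
    (hz : z ∈ orbitOf (A : Set (Equiv.Perm X)) x) :
    a z ∈ orbitOf (A : Set (Equiv.Perm X)) x := by
  obtain ⟨c, hc, rfl⟩ := hz
  exact ⟨a * c, A.mul_mem ha hc, rfl⟩

lemma orbitOf_eq_of_mem {x z : X} (hz : z ∈ orbitOf (A : Set (Equiv.Perm X)) x) :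
    orbitOf (A : Set (Equiv.Perm X)) z = orbitOf (A : Set (Equiv.Perm X)) x := by
  obtain ⟨c, hc, rfl⟩ := hz
  ext w
  constructor
  · rintro ⟨d, hd, rfl⟩; exact ⟨d * c, A.mul_mem hd hc, rfl⟩
  · rintro ⟨d, hd, rfl⟩; exact ⟨d * c⁻¹, A.mul_mem hd (A.inv_mem hc), by simp⟩

lemma orbitOf_disjoint {x y z : X}
    (hne : orbitOf (A : Set (Equiv.Perm X)) y ≠ orbitOf (A : Set (Equiv.Perm X)) x)
    (hz : z ∈ orbitOf (A : Set (Equiv.Perm X)) y) :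
    z ∉ orbitOf (A : Set (Equiv.Perm X)) x := fun hz' =>
  hne ((orbitOf_eq_of_mem hz).symm.trans (orbitOf_eq_of_mem hz'))

lemma mem_orbitOf_iff_smul {a : Equiv.Perm X} (ha : a ∈ A) {x z : X} :
    z ∈ orbitOf (A : Set (Equiv.Perm X)) x ↔ a z ∈ orbitOf (A : Set (Equiv.Perm X)) x := by
  constructor
  · exact smul_mem_orbitOf ha
  · intro h
    have := smul_mem_orbitOf (A.inv_mem ha) h
    simpa using this

end Aux

theorem statement11 (X : Type*) [Fintype X] (A : Subgroup (Equiv.Perm X))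
    (hab : ∀ a ∈ A, ∀ b ∈ A, a * b = b * a) (hclosed : TwoOrbitClosed A)
    (h2 : ∃ x y : X, orbitOf (A : Set (Equiv.Perm X)) x ≠ orbitOf (A : Set (Equiv.Perm X)) y)
    (x : X) (a : Equiv.Perm X) (ha : a ∈ A) :
    (∃ b ∈ A, (∀ z ∈ orbitOf (A : Set (Equiv.Perm X)) x, b z = a z) ∧
        ∀ z ∉ orbitOf (A : Set (Equiv.Perm X)) x, b z = z) ↔
      ∀ y : X, orbitOf (A : Set (Equiv.Perm X)) y ≠ orbitOf (A : Set (Equiv.Perm X)) x →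
        ∃ b ∈ A, (∀ z ∈ orbitOf (A : Set (Equiv.Perm X)) x, b z = a z) ∧
          ∀ z ∈ orbitOf (A : Set (Equiv.Perm X)) y, b z = z := by
  classical
  set O := orbitOf (A : Set (Equiv.Perm X)) x with hO
  constructor
  · rintro ⟨b, hb, hb1, hb2⟩ y hy
    exact ⟨b, hb, hb1, fun z hz => hb2 z (orbitOf_disjoint hy hz)⟩
  · intro h
    -- define σ equal to a on O, identity elsewhere
    let σ : Equiv.Perm X :=
      { toFun := fun z => if z ∈ O then a z else z
        invFun := fun z => if z ∈ O then a⁻¹ z else z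
        left_inv := by
          intro z
          by_cases hz : z ∈ O
          · simp [hz, (show a z ∈ O from (mem_orbitOf_iff_smul ha).mp hz)]
          · simp [hz]
        right_inv := by
          intro z
          by_cases hz : z ∈ O
          · have : a⁻¹ z ∈ O := by
              have := (mem_orbitOf_iff_smul (A.inv_mem ha) (x := x) (z := z)).mp hz
              simpa using this
            simp [hz, (show a.symm z ∈ O from this)]
          · simp [hz] }
    have hσ : ∀ z, σ z = if z ∈ O then a z else z := fun z => rfl
    have hσA : σ ∈ A := by
      apply hclosed
      intro u v
      by_cases hu : orbitOf (A : Set (Equiv.Perm X)) u = O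
      · by_cases hv : orbitOf (A : Set (Equiv.Perm X)) v = O
        · refine ⟨a, ha, ?_⟩
          rintro z (hz | hz)
          · rw [hσ]; rw [hu] at hz; simp [hz]
          · rw [hσ]; rw [hv] at hz; simp [hz]
        · obtain ⟨b, hb, hb1, hb2⟩ := h v hv
          refine ⟨b, hb, ?_⟩
          rintro z (hz | hz)
          · rw [hu] at hz; rw [hσ]; simp [hz, hb1 z hz]
          · have hz' : z ∉ O := orbitOf_disjoint hv hz
            rw [hσ]; simp [hz', hb2 z hz]
      · by_cases hv : orbitOf (A : Set (Equiv.Perm X)) v = O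
        · obtain ⟨b, hb, hb1, hb2⟩ := h u hu
          refine ⟨b, hb, ?_⟩
          rintro z (hz | hz)
          · have hz' : z ∉ O := orbitOf_disjoint hu hz
            rw [hσ]; simp [hz', hb2 z hz]
          · rw [hv] at hz; rw [hσ]; simp [hz, hb1 z hz]
        · refine ⟨1, A.one_mem, ?_⟩
          rintro z (hz | hz)
          · have hz' : z ∉ O := orbitOf_disjoint hu hz
            rw [hσ]; simp [hz']
          · have hz' : z ∉ O := orbitOf_disjoint hv hz
            rw [hσ]; simp [hz']
    refine ⟨σ, hσA, ?_, ?_⟩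
    · intro z hz; rw [hσ]; simp [hz]
    · intro z hz; rw [hσ]; simp [hz]
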